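/- Assume gcd(w_1,…,w_n) = 1 and fix k with 1 ≤ k < n. Consider the projection π : ∏_{i=1}^n ℤ/(d/w_i)ℤ → ∏_{i=k+1}^n ℤ/(d/w_i)ℤ onto the last n−k coordinates. Then the image π(M) has exactly (1/gcd(w_1,…,w_k)) · ∏_{i=k+1}^n (d/w_i) elements; i.e. a tuple of last n−k entries occurs in an element of M if and only if its weighted degree Σ_{i=k+1}^n w_i·t̃_i is divisible by gcd(w_1,…,w_k) modulo d, and the number of such tuples is (1/gcd(w_1,…,w_k)) · ∏_{i=k+1}^n (d/w_i). -/

import Mathlib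

/- Statement 11: the projection of M onto the last n−k coordinates.
A tuple t occurs as the last n−k entries of an element of M iff
gcd(w_1,…,w_k) divides its weighted degree, and the image has exactly
(1/gcd(w_1,…,w_k))·∏_{i=k+1}^n (d/w_i) elements. -/


lemma cast_mul_mod' {m : ℕ} (c e x : ℕ) (h : m ∣ c * e) :
    ((c * (x % e) : ℕ) : ZMod m) = ((c * x : ℕ) : ZMod m) := by
  obtain ⟨q, hq⟩ := h
  have key : c * x = c * (x % e) + c * e * (x / e) := by
    rw [mul_assoc, ← Nat.mul_add, Nat.mod_add_div]
  rw [key, hq]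
  push_cast [ZMod.natCast_self]
  ring

def weightedHom {ι : Type*} [Fintype ι] (e : ι → ℕ) (c : ι → ℕ) (m : ℕ)
    (hpos : ∀ i, 0 < e i) (h : ∀ i, m ∣ c i * e i) :
    (∀ i, ZMod (e i)) →+ ZMod m where
  toFun t := ((∑ i, c i * (t i).val : ℕ) : ZMod m)
  map_zero' := by
    haveI : ∀ i, NeZero (e i) := fun i => ⟨(hpos i).ne'⟩
    simp
  map_add' a b := by
    haveI : ∀ i, NeZero (e i) := fun i => ⟨(hpos i).ne'⟩
    have key : ∀ i : ι, ((c i * ((a i + b i).val) : ℕ) : ZMod m)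
        = ((c i * (a i).val : ℕ) : ZMod m) + ((c i * (b i).val : ℕ) : ZMod m) := by
      intro i
      rw [ZMod.val_add, cast_mul_mod' _ _ _ (h i), Nat.mul_add]
      push_cast
      ring
    simp only [Pi.add_apply]
    rw [Nat.cast_sum, Nat.cast_sum, Nat.cast_sum, ← Finset.sum_add_distrib]
    exact Finset.sum_congr rfl fun i _ => key i

lemma weightedHom_apply {ι : Type*} [Fintype ι] (e : ι → ℕ) (c : ι → ℕ) (m : ℕ)
    (hpos : ∀ i, 0 < e i) (h : ∀ i, m ∣ c i * e i) (t : ∀ i, ZMod (e i)) :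
    weightedHom e c m hpos h t = ((∑ i, c i * (t i).val : ℕ) : ZMod m) := rfl

lemma single_mem_range {ι : Type*} [Fintype ι] [DecidableEq ι] (e : ι → ℕ) (c : ι → ℕ) (m : ℕ)
    (hpos : ∀ i, 0 < e i) (h : ∀ i, m ∣ c i * e i) (j : ι) :
    ((c j : ℕ) : ZMod m) ∈ (weightedHom e c m hpos h).range := by
  haveI : ∀ i, NeZero (e i) := fun i => ⟨(hpos i).ne'⟩
  refine ⟨Pi.single (M := fun i => ZMod (e i)) j 1, ?_⟩
  rw [weightedHom_apply]
  have : ∑ i, c i * ((Pi.single (M := fun i => ZMod (e i)) j 1) i).val = c j * (1 % e j) := by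
    rw [Finset.sum_eq_single j]
    · rw [Pi.single_eq_same, ZMod.val_one_eq_one_mod]
    · intro i _ hij
      rw [Pi.single_eq_of_ne hij]
      simp
    · simp
  rw [this, cast_mul_mod' _ _ _ (h j), mul_one]

lemma mul_cast_mem {m : ℕ} (S : AddSubgroup (ZMod m)) (a : ℕ)
    (ha : ((a : ℕ) : ZMod m) ∈ S) (b : ℕ) : ((a * b : ℕ) : ZMod m) ∈ S := by
  have : ((a * b : ℕ) : ZMod m) = b • ((a : ℕ) : ZMod m) := by
    push_cast [nsmul_eq_mul]
    ring
  rw [this]; exact S.nsmul_mem ha b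

lemma gcd_pair_mem {m : ℕ} (S : AddSubgroup (ZMod m)) (a b : ℕ)
    (ha : ((a : ℕ) : ZMod m) ∈ S) (hb : ((b : ℕ) : ZMod m) ∈ S) :
    ((Nat.gcd a b : ℕ) : ZMod m) ∈ S := by
  have h := Nat.gcd_eq_gcd_ab a b
  have key : ((Nat.gcd a b : ℕ) : ZMod m)
      = (Nat.gcdA a b) • ((a : ℕ) : ZMod m) + (Nat.gcdB a b) • ((b : ℕ) : ZMod m) := by
    rw [zsmul_eq_mul, zsmul_eq_mul]
    have : ((Nat.gcd a b : ℕ) : ZMod m) = (((Nat.gcd a b : ℤ)) : ZMod m) := by push_cast; ring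
    rw [this, h]
    push_cast
    ring
  rw [key]
  exact S.add_mem (S.zsmul_mem ha _) (S.zsmul_mem hb _)

lemma gcd_cast_mem {m : ℕ} (S : AddSubgroup (ZMod m)) {ι : Type*} [DecidableEq ι] (s : Finset ι) (f : ι → ℕ)
    (h : ∀ i ∈ s, ((f i : ℕ) : ZMod m) ∈ S) : ((s.gcd f : ℕ) : ZMod m) ∈ S := by
  induction s using Finset.induction with
  | empty => simpa using S.zero_mem
  | @insert a s ha ih =>
    rw [Finset.gcd_insert]
    exact gcd_pair_mem S _ _ (h _ (Finset.mem_insert_self _ _))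
      (ih fun i hi => h i (Finset.mem_insert_of_mem hi))

theorem stmt_11 {n k : ℕ} (hk : 1 ≤ k) (hkn : k < n)
    (w : Fin n → ℕ) (hw : ∀ i, 0 < w i)
    (d : ℕ) (hd : d = ∑ i, w i) (hdvd : ∀ i, w i ∣ d)
    (hgcd : Finset.univ.gcd w = 1)
    (M : Set (∀ i : Fin n, ZMod (d / w i)))
    (hM : M = {x | d ∣ ∑ i, w i * (x i).val})
    (π : (∀ i : Fin n, ZMod (d / w i)) →
        ∀ j : {i : Fin n // k ≤ (i : ℕ)}, ZMod (d / w j.val))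
    (hπ : π = fun x j => x j.val)
    (g : ℕ)
    (hg : g = Finset.gcd (Finset.univ.filter (fun i : Fin n => (i : ℕ) < k)) w) :
    (∀ t : ∀ j : {i : Fin n // k ≤ (i : ℕ)}, ZMod (d / w j.val),
        t ∈ π '' M ↔ g ∣ ∑ j : {i : Fin n // k ≤ (i : ℕ)}, w j.val * (t j).val) ∧
    (π '' M).Finite ∧
    (π '' M).ncard * g = ∏ j : {i : Fin n // k ≤ (i : ℕ)}, (d / w j.val) := by
  subst hM hπ
  have hn : 0 < n := lt_of_le_of_lt (Nat.zero_le k) hkn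
  have hd0 : 0 < d := by
    rw [hd]
    exact Finset.sum_pos (fun i _ => hw i) ⟨⟨0, hn⟩, Finset.mem_univ _⟩
  have hepos : ∀ i, 0 < d / w i := fun i => Nat.div_pos (Nat.le_of_dvd hd0 (hdvd i)) (hw i)
  have hwe : ∀ i, w i * (d / w i) = d := fun i => Nat.mul_div_cancel' (hdvd i)
  have hgw : ∀ i : Fin n, (i : ℕ) < k → g ∣ w i := fun i hi =>
    hg ▸ Finset.gcd_dvd (Finset.mem_filter.mpr ⟨Finset.mem_univ _, hi⟩)
  have hgd : g ∣ d := (hgw ⟨0, hn⟩ hk).trans (hdvd _)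
  have hg0 : 0 < g := by
    rcases Nat.eq_zero_or_pos g with h0 | h0
    · exfalso
      have h00 : (Finset.univ.filter (fun i : Fin n => (i : ℕ) < k)).gcd w = 0 := hg ▸ h0
      have := Finset.gcd_eq_zero_iff.mp h00 (⟨0, hn⟩ : Fin n)
        (Finset.mem_filter.mpr ⟨Finset.mem_univ _, hk⟩)
      exact (hw _).ne' this
    · exact h0
  haveI : ∀ i : Fin n, NeZero (d / w i) := fun i => ⟨(hepos i).ne'⟩
  haveI : NeZero g := ⟨hg0.ne'⟩
  haveI : NeZero d := ⟨hd0.ne'⟩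
  -- sum splitting
  have hsplit : ∀ x : (∀ i : Fin n, ZMod (d / w i)),
      ∑ i, w i * (x i).val
        = (∑ i : {i : Fin n // (i : ℕ) < k}, w i.val * (x i.val).val)
          + ∑ j : {i : Fin n // k ≤ (i : ℕ)}, w j.val * (x j.val).val := by
    intro x
    rw [← Finset.sum_filter_add_sum_filter_not Finset.univ (fun i : Fin n => (i : ℕ) < k)
        (fun i : Fin n => w i * (x i).val)]
    congr 1
    · exact Finset.sum_subtype _ (by simp) _
    · exact Finset.sum_subtype _ (by simp [not_lt]) _
  -- ψ : hom on first k coordinates, into ZMod d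
  set ψ := weightedHom (fun i : {i : Fin n // (i : ℕ) < k} => d / w i.val)
      (fun i => w i.val) d (fun i => hepos _) (fun i => by rw [hwe]) with hψ
  have hgmem : ((g : ℕ) : ZMod d) ∈ ψ.range := by
    have h1 : ∀ i ∈ Finset.univ.filter (fun i : Fin n => (i : ℕ) < k),
        ((w i : ℕ) : ZMod d) ∈ ψ.range := by
      intro i hi
      have hik : (i : ℕ) < k := (Finset.mem_filter.mp hi).2
      exact single_mem_range _ _ _ _ _ (⟨i, hik⟩ : {i : Fin n // (i : ℕ) < k})
    have := gcd_cast_mem ψ.range (Finset.univ.filter (fun i : Fin n => (i : ℕ) < k)) w h1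
    rwa [← hg] at this
  -- the main iff
  have hiff : ∀ t : ∀ j : {i : Fin n // k ≤ (i : ℕ)}, ZMod (d / w j.val),
      t ∈ (fun x (j : {i : Fin n // k ≤ (i : ℕ)}) => x j.val) ''
          {x : ∀ i : Fin n, ZMod (d / w i) | d ∣ ∑ i, w i * (x i).val}
        ↔ g ∣ ∑ j : {i : Fin n // k ≤ (i : ℕ)}, w j.val * (t j).val := by
    intro t
    constructor
    · rintro ⟨x, hx, rfl⟩
      have htot : g ∣ ∑ i, w i * (x i).val := hgd.trans hx
      have hfirst : g ∣ ∑ i : {i : Fin n // (i : ℕ) < k}, w i.val * (x i.val).val :=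
        Finset.dvd_sum fun i _ => Dvd.dvd.mul_right (hgw i.val i.2) _
      rw [hsplit x] at htot
      exact (Nat.dvd_add_right hfirst).mp htot
    · intro ht
      obtain ⟨q, hq⟩ := ht
      have hmem : ((∑ j : {i : Fin n // k ≤ (i : ℕ)}, w j.val * (t j).val : ℕ) : ZMod d)
          ∈ ψ.range := by
        rw [hq]; exact mul_cast_mem _ _ hgmem q
      obtain ⟨a, ha⟩ := ψ.range.neg_mem hmem
      set x : ∀ i : Fin n, ZMod (d / w i) :=
        fun i => if h : (i : ℕ) < k then a ⟨i, h⟩ else t ⟨i, not_lt.mp h⟩ with hxdef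
      have hx1 : ∀ i : {i : Fin n // (i : ℕ) < k}, x i.val = a i := by
        intro i
        show (if h : ((i : Fin n) : ℕ) < k then a ⟨i, h⟩ else t ⟨i, not_lt.mp h⟩) = a i
        rw [dif_pos i.2]
      have hx2 : ∀ j : {i : Fin n // k ≤ (i : ℕ)}, x j.val = t j := by
        intro j
        show (if h : ((j : Fin n) : ℕ) < k then a ⟨j, h⟩ else t ⟨j, not_lt.mp h⟩) = t j
        rw [dif_neg (not_lt.mpr j.2)]
      refine ⟨x, ?_, funext hx2⟩
      show d ∣ _
      rw [← ZMod.natCast_eq_zero_iff, hsplit]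
      have e1 : (∑ i : {i : Fin n // (i : ℕ) < k}, w i.val * (x i.val).val)
          = ∑ i : {i : Fin n // (i : ℕ) < k}, w i.val * (a i).val :=
        Finset.sum_congr rfl fun i _ => by rw [hx1 i]
      have e2 : (∑ j : {i : Fin n // k ≤ (i : ℕ)}, w j.val * (x j.val).val)
          = ∑ j : {i : Fin n // k ≤ (i : ℕ)}, w j.val * (t j).val :=
        Finset.sum_congr rfl fun j _ => by rw [hx2 j]
      rw [e1, e2, Nat.cast_add]
      have hpsi : ((∑ i : {i : Fin n // (i : ℕ) < k}, w i.val * (a i).val : ℕ) : ZMod d)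
          = ψ a := rfl
      rw [hpsi, ha, neg_add_cancel]
  -- φ : hom on last coordinates, into ZMod g
  set φ := weightedHom (fun j : {i : Fin n // k ≤ (i : ℕ)} => d / w j.val)
      (fun j => w j.val) g (fun j => hepos _) (fun j => by rw [hwe]; exact hgd) with hφ
  set G' := (Finset.univ.filter (fun i : Fin n => ¬ (i : ℕ) < k)).gcd w with hG'
  have hco : Nat.Coprime G' g := by
    have hu : (Finset.univ.filter (fun i : Fin n => (i : ℕ) < k))
        ∪ (Finset.univ.filter (fun i : Fin n => ¬ (i : ℕ) < k)) = Finset.univ :=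
      Finset.filter_union_filter_not_eq _ _
    have h1 : Nat.gcd g G' = 1 := by
      have : GCDMonoid.gcd g G' = Finset.univ.gcd w := by
        rw [← hu, Finset.gcd_union, hg]
      rw [show Nat.gcd g G' = GCDMonoid.gcd g G' from rfl, this, hgcd]
    exact Nat.coprime_comm.mp h1
  have hsurj : Function.Surjective φ := by
    have hG'mem : ((G' : ℕ) : ZMod g) ∈ φ.range := by
      refine gcd_cast_mem φ.range _ w fun i hi => ?_
      have hik : k ≤ (i : ℕ) := not_lt.mp (Finset.mem_filter.mp hi).2
      exact single_mem_range _ _ _ _ _ (⟨i, hik⟩ : {i : Fin n // k ≤ (i : ℕ)})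
    intro y
    set u := ZMod.unitOfCoprime G' hco with hu
    set z := ((u⁻¹ : (ZMod g)ˣ) : ZMod g) * y with hz
    have hy : ((G' * z.val : ℕ) : ZMod g) = y := by
      push_cast
      rw [ZMod.natCast_val, ZMod.cast_id, hz,
        show ((G' : ZMod g)) = (u : ZMod g) from (ZMod.coe_unitOfCoprime _ _).symm,
        ← mul_assoc, Units.mul_inv, one_mul]
    obtain ⟨t, htt⟩ := mul_cast_mem φ.range G' hG'mem z.val
    exact ⟨t, by rw [htt, hy]⟩
  -- identify image with kernel
  have hker : ((fun x (j : {i : Fin n // k ≤ (i : ℕ)}) => x j.val) ''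
      {x : ∀ i : Fin n, ZMod (d / w i) | d ∣ ∑ i, w i * (x i).val}) = (φ.ker : Set _) := by
    ext t
    rw [hiff t]
    constructor
    · intro h
      have : φ t = ((∑ j : {i : Fin n // k ≤ (i : ℕ)}, w j.val * (t j).val : ℕ) : ZMod g) := rfl
      exact AddMonoidHom.mem_ker.mpr (by rw [this, ZMod.natCast_eq_zero_iff]; exact h)
    · intro h
      have h0 : ((∑ j : {i : Fin n // k ≤ (i : ℕ)}, w j.val * (t j).val : ℕ) : ZMod g) = 0 :=
        AddMonoidHom.mem_ker.mp h
      exact (ZMod.natCast_eq_zero_iff _ _).mp h0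
  refine ⟨hiff, Set.toFinite _, ?_⟩
  have hcard1 : Nat.card (∀ j : {i : Fin n // k ≤ (i : ℕ)}, ZMod (d / w j.val))
      = ∏ j : {i : Fin n // k ≤ (i : ℕ)}, (d / w j.val) := by
    rw [Nat.card_pi]
    exact Finset.prod_congr rfl fun j _ => Nat.card_zmod _
  have hcard2 := AddSubgroup.card_eq_card_quotient_mul_card_addSubgroup (φ.ker)
  have hquot : Nat.card ((∀ j : {i : Fin n // k ≤ (i : ℕ)}, ZMod (d / w j.val)) ⧸ φ.ker)
      = g := by
    rw [Nat.card_congr (QuotientAddGroup.quotientKerEquivOfSurjective φ hsurj).toEquiv]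
    exact Nat.card_zmod g
  have hnc : ((fun x (j : {i : Fin n // k ≤ (i : ℕ)}) => x j.val) ''
      {x : ∀ i : Fin n, ZMod (d / w i) | d ∣ ∑ i, w i * (x i).val}).ncard
      = Nat.card φ.ker := by
    rw [hker, ← Nat.card_coe_set_eq]
    rfl
  rw [hnc, ← hcard1, hcard2, hquot, mul_comm]
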